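/- Let N ≥ 1 and m : Fin N → ℕ, and for k ∈ ℕ let f(k) be the number of functions a : Fin N → ℕ with a i ≤ m i for all i and ∑ᵢ a i = k; let D = ∑ᵢ m i. Then for all integers k, l with 0 ≤ k ≤ l and k + l ≤ D, one has f(k) ≤ f(l); in particular the sequence f(0), f(1), …, f(D) is unimodal. -/

import Mathlib

open Finset

def bcSet (N : ℕ) (m : Fin N → ℕ) (k : ℕ) : Finset (Fin N → ℕ) :=
  (Fintype.piFinset fun i => Finset.range (m i + 1)).filter fun a => ∑ i, a i = k

def bc (N : ℕ) (m : Fin N → ℕ) (k : ℕ) : ℕ := (bcSet N m k).card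

lemma mem_bcSet_iff {N : ℕ} {m : Fin N → ℕ} {k : ℕ} {a : Fin N → ℕ} :
    a ∈ bcSet N m k ↔ (∀ i, a i ≤ m i) ∧ ∑ i, a i = k := by
  simp [bcSet, Fintype.mem_piFinset, Nat.lt_succ_iff]

lemma bc_zero (m : Fin 0 → ℕ) (k : ℕ) : bc 0 m k = if k = 0 then 1 else 0 := by
  rcases Nat.eq_zero_or_pos k with h | h
  · subst h
    simp [bc, bcSet]
  · simp only [bc, bcSet]
    rw [if_neg (by omega)]
    rw [Finset.card_eq_zero, Finset.filter_eq_empty_iff]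
    intro a _
    simp only [Finset.univ_eq_empty, Finset.sum_empty]
    omega

lemma bc_succ (N : ℕ) (m : Fin (N + 1) → ℕ) (k : ℕ) :
    bc (N + 1) m k = ∑ j ∈ Finset.range (m 0 + 1),
      if j ≤ k then bc N (fun i => m i.succ) (k - j) else 0 := by
  classical
  have h1 : bc (N + 1) m k = ((Finset.range (m 0 + 1) ×ˢ
      Fintype.piFinset fun i : Fin N => Finset.range (m i.succ + 1)).filter
        fun p => p.1 + ∑ i, p.2 i = k).card := by
    rw [bc, ← Finset.card_map (Fin.consEquiv fun _ : Fin (N+1) => ℕ).toEmbedding]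
    congr 1
    ext a
    rw [Finset.mem_map_equiv]
    simp only [mem_bcSet_iff, Finset.mem_filter, Finset.mem_product, Fintype.mem_piFinset,
      Finset.mem_range, Nat.lt_succ_iff, Fin.consEquiv, Equiv.coe_fn_symm_mk, Fin.tail]
    constructor
    · rintro ⟨h1, h2⟩
      exact ⟨⟨h1 0, fun i => h1 i.succ⟩, by rw [← h2, Fin.sum_univ_succ]⟩
    · rintro ⟨⟨h1, h2⟩, h3⟩
      constructor
      · intro i
        induction i using Fin.cases with
        | zero => exact h1
        | succ i => exact h2 i
      · rw [Fin.sum_univ_succ, ← h3]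
  rw [h1, Finset.card_filter, Finset.sum_product]
  refine Finset.sum_congr rfl fun j _ => ?_
  by_cases hj : j ≤ k
  · rw [if_pos hj, bc, bcSet, Finset.card_filter]
    refine Finset.sum_congr rfl fun b _ => ?_
    congr 1
    simp only [eq_iff_iff]
    omega
  · rw [if_neg hj]
    refine Finset.sum_eq_zero fun b _ => ?_
    rw [if_neg (by omega)]

lemma bc_symm (N : ℕ) (m : Fin N → ℕ) (k : ℕ) (hk : k ≤ ∑ i, m i) :
    bc N m k = bc N m (∑ i, m i - k) := by
  classical
  have key : ∀ {a : Fin N → ℕ} {s : ℕ}, (∀ i, a i ≤ m i) → ∑ i, a i = s →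
      ∑ i, (m i - a i) = ∑ i, m i - s := by
    intro a s h1 h2
    have : ∑ i, (m i - a i) + ∑ i, a i = ∑ i, m i := by
      rw [← Finset.sum_add_distrib]
      exact Finset.sum_congr rfl fun i _ => Nat.sub_add_cancel (h1 i)
    omega
  refine Finset.card_nbij' (fun a i => m i - a i) (fun a i => m i - a i) ?_ ?_ ?_ ?_
  · intro a ha
    rw [Finset.mem_coe, mem_bcSet_iff] at ha ⊢
    exact ⟨fun i => Nat.sub_le _ _, key ha.1 ha.2⟩
  · intro a ha
    rw [Finset.mem_coe, mem_bcSet_iff] at ha ⊢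
    refine ⟨fun i => Nat.sub_le _ _, ?_⟩
    rw [key ha.1 ha.2]
    omega
  · intro a ha
    rw [Finset.mem_coe, mem_bcSet_iff] at ha
    funext i
    have := ha.1 i
    simp; omega
  · intro a ha
    rw [Finset.mem_coe, mem_bcSet_iff] at ha
    funext i
    have := ha.1 i
    simp; omega

lemma chain_mono (f : ℕ → ℕ) (D : ℕ) (hsymm : ∀ k, k ≤ D → f k = f (D - k))
    (hstep : ∀ k, 2 * k + 1 ≤ D → f k ≤ f (k + 1)) :
    ∀ k l, k ≤ l → k + l ≤ D → f k ≤ f l := by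
  have mono : ∀ l, ∀ k, k ≤ l → 2 * l ≤ D + 1 → f k ≤ f l := by
    intro l
    induction l with
    | zero => intro k hk _; interval_cases k; exact le_rfl
    | succ l ihl =>
      intro k hk h2l
      rcases Nat.lt_succ_iff_lt_or_eq.mp (Nat.lt_succ_of_le hk) with h | h
      · exact le_trans (ihl k (by omega) (by omega)) (hstep l (by omega))
      · subst h; exact le_rfl
  intro k l hkl hsum
  by_cases h : 2 * l ≤ D + 1
  · exact mono l k hkl h
  · rw [hsymm l (by omega)]
    exact mono (D - l) k (by omega) (by omega)

lemma bc_main : ∀ (N : ℕ) (m : Fin N → ℕ) (k l : ℕ), k ≤ l → k + l ≤ ∑ i, m i →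
    bc N m k ≤ bc N m l := by
  intro N
  induction N with
  | zero =>
    intro m k l hkl hsum
    simp only [Finset.univ_eq_empty, Finset.sum_empty] at hsum
    obtain ⟨rfl, rfl⟩ : k = 0 ∧ l = 0 := by omega
    exact le_rfl
  | succ N ih =>
    intro m
    have hD : ∑ i, m i = m 0 + ∑ i : Fin N, m i.succ := Fin.sum_univ_succ m
    have hstep : ∀ k, 2 * k + 1 ≤ ∑ i, m i → bc (N + 1) m k ≤ bc (N + 1) m (k + 1) := by
      intro k hk
      rw [bc_succ, bc_succ]
      rw [Finset.sum_range_succ'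
        (fun j => if j ≤ k + 1 then bc N (fun i => m i.succ) (k + 1 - j) else 0) (m 0)]
      rw [Finset.sum_range_succ]
      have hterm : ∀ j, (if j + 1 ≤ k + 1 then bc N (fun i => m i.succ) (k + 1 - (j + 1)) else 0)
          = (if j ≤ k then bc N (fun i => m i.succ) (k - j) else 0) := by
        intro j
        by_cases hj : j ≤ k
        · rw [if_pos (by omega), if_pos hj]
          congr 1
          omega
        · rw [if_neg (by omega), if_neg hj]
      simp only [hterm]
      rw [if_pos (Nat.zero_le _)]
      refine Nat.add_le_add_left ?_ _
      by_cases hm : m 0 ≤ k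
      · rw [if_pos hm]
        exact ih _ (k - m 0) (k + 1 - 0) (by omega) (by omega)
      · rw [if_neg hm]
        exact Nat.zero_le _
    exact chain_mono (bc (N + 1) m) (∑ i, m i) (fun k hk => bc_symm (N + 1) m k hk) hstep

/-- Unimodality (in the form of the top-heavy inequality on the increasing half) for the
number of lattice points of the box `∏ i, {0, …, m i}` with coordinate sum `k`. -/
theorem box_counting_unimodal (N : ℕ) (hN : 1 ≤ N) (m : Fin N → ℕ)
    (k l : ℕ) (hkl : k ≤ l) (hsum : k + l ≤ ∑ i, m i) :
    Nat.card {a : Fin N → ℕ // (∀ i, a i ≤ m i) ∧ ∑ i, a i = k} ≤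
      Nat.card {a : Fin N → ℕ // (∀ i, a i ≤ m i) ∧ ∑ i, a i = l} := by
  have hc : ∀ j, Nat.card {a : Fin N → ℕ // (∀ i, a i ≤ m i) ∧ ∑ i, a i = j} = bc N m j := by
    intro j
    rw [bc, ← Nat.card_eq_finsetCard (bcSet N m j)]
    exact Nat.card_congr (Equiv.subtypeEquivRight fun a => mem_bcSet_iff.symm)
  rw [hc k, hc l]
  exact bc_main N m k l hkl hsum
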